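/- Let 0 < a < b, A = (a+b)/2, and f : [a,b] → ℝ continuous on [a,b], differentiable on (a,A) ∪ (A,b), with |f'(t)| ≤ M₁·t^{-2} for t ∈ (a,A) and |f'(t)| ≤ M₂·t^{-2} for t ∈ (A,b). Then |f(A) - (1/(b-a))∫_a^b f(t) dt| ≤ (1/2)·[ M₁·(A - L(a,A))/(L(a,A)·A) + M₂·(L(A,b) - A)/(L(A,b)·A) ], where L(u,v) = (v-u)/(ln v - ln u) is the logarithmic mean. -/

import Mathlib

open MeasureTheory intervalIntegral Set

lemma key_aux (f f' : ℝ → ℝ) (M c d : ℝ) (hc : 0 < c) (hcd : c < d)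
    (hfc : ContinuousOn f (Set.Icc c d))
    (hder : ∀ t ∈ Set.Ioo c d, HasDerivAt f (f' t) t)
    (hM : ∀ t ∈ Set.Ioo c d, |f' t| ≤ M * t ^ (-2 : ℤ)) :
    |f d - f c| ≤ M * (1 / c - 1 / d) := by
  have hd : 0 < d := hc.trans hcd
  have ht0 : (c + d) / 2 ∈ Set.Ioo c d := by constructor <;> linarith
  have ht0pos : (0:ℝ) < (c + d) / 2 := by linarith
  have hM0 : 0 ≤ M := by
    have h1 := (abs_nonneg (f' ((c+d)/2))).trans (hM _ ht0)
    have h2 : (0:ℝ) < ((c + d) / 2) ^ (-2 : ℤ) := zpow_pos ht0pos _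
    nlinarith
  -- bound constant
  have hbound : ∀ t ∈ Set.Ioo c d, |f' t| ≤ M * c ^ (-2 : ℤ) := by
    intro t ht
    refine (hM t ht).trans ?_
    have htpos : 0 < t := hc.trans ht.1
    have h2 : (0:ℝ) < c ^ (2:ℤ) := zpow_pos hc _
    have h3 : c ^ (2:ℤ) ≤ t ^ (2:ℤ) := by
      rw [zpow_two, zpow_two]; nlinarith [ht.1.le]
    rw [zpow_neg, zpow_neg]
    exact mul_le_mul_of_nonneg_left (inv_anti₀ h2 h3) hM0
  -- integrability of f'
  have hderiv_eq : ∀ t ∈ Set.Ioo c d, deriv f t = f' t := fun t ht => (hder t ht).deriv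
  have haeIoo : ∀ᵐ t ∂(volume.restrict (Set.Ioc c d)), t ∈ Set.Ioo c d := by
    have h1 : ∀ᵐ t ∂(volume.restrict (Set.Ioc c d)), t ∈ Set.Ioc c d :=
      ae_restrict_mem measurableSet_Ioc
    have h2 : ∀ᵐ t ∂(volume.restrict (Set.Ioc c d)), t ≠ d := by
      rw [ae_iff]
      have : {t : ℝ | ¬ t ≠ d} = {d} := by ext; simp
      rw [this]
      exact measure_mono_null (fun x hx => hx) (by
        exact le_antisymm ((Measure.restrict_apply_le _ _).trans (by simp)) zero_le)
    filter_upwards [h1, h2] with t h1 h2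
    exact ⟨h1.1, lt_of_le_of_ne h1.2 h2⟩
  have hint_deriv : IntegrableOn (deriv f) (Set.Ioc c d) := by
    refine Integrable.mono' (g := fun _ => M * c ^ (-2:ℤ)) (integrableOn_const measure_Ioc_lt_top.ne)
      (measurable_deriv f).aestronglyMeasurable.restrict ?_
    filter_upwards [haeIoo] with t ht
    rw [Real.norm_eq_abs, hderiv_eq t ht]
    exact hbound t ht
  have hint : IntervalIntegrable f' volume c d := by
    rw [intervalIntegrable_iff_integrableOn_Ioc_of_le hcd.le]
    refine hint_deriv.congr ?_
    filter_upwards [haeIoo] with t ht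
    exact hderiv_eq t ht
  -- FTC
  have hftc : ∫ y in c..d, f' y = f d - f c := by
    apply intervalIntegral.integral_eq_sub_of_hasDeriv_right_of_le hcd.le hfc
      (fun x hx => (hder x hx).hasDerivWithinAt) hint
  rw [← hftc]
  -- bound integral
  have hg_int : IntervalIntegrable (fun t => M * t ^ (-2:ℤ)) volume c d := by
    apply ContinuousOn.intervalIntegrable
    rw [Set.uIcc_of_le hcd.le]
    exact continuousOn_const.mul ((continuousOn_id.zpow₀ _ (fun x hx =>
      Or.inl (ne_of_gt (lt_of_lt_of_le hc hx.1)))))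
  have hval : ∫ t in c..d, M * t ^ (-2:ℤ) = M * (1/c - 1/d) := by
    rw [intervalIntegral.integral_const_mul, integral_zpow (by
      right
      constructor
      · norm_num
      · rw [Set.uIcc_of_le hcd.le]
        intro h
        exact absurd h.1 (by linarith))]
    norm_num
    field_simp
    left; ring
  calc |∫ y in c..d, f' y| ≤ |∫ t in c..d, M * t ^ (-2:ℤ)| := by
        rw [← Real.norm_eq_abs]
        apply intervalIntegral.norm_integral_le_abs_of_norm_le ?_ hg_int
        rw [Set.uIoc_of_le hcd.le]
        filter_upwards [haeIoo] with t ht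
        rw [Real.norm_eq_abs]
        exact hM t ht
    _ = M * (1/c - 1/d) := by
        rw [hval, abs_of_nonneg]
        have : 1/d < 1/c := one_div_lt_one_div_of_lt hc hcd
        apply mul_nonneg hM0; linarith

theorem ostrowski_log_mean_midpoint (a b : ℝ) (ha : 0 < a) (hab : a < b)
    (f f' : ℝ → ℝ) (M₁ M₂ : ℝ)
    (hfc : ContinuousOn f (Set.Icc a b))
    (hf' : ∀ t ∈ Set.Ioo a b \ {(a + b) / 2}, HasDerivAt f (f' t) t)
    (hM₁ : ∀ t ∈ Set.Ioo a ((a + b) / 2), |f' t| ≤ M₁ * t ^ (-2 : ℤ))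
    (hM₂ : ∀ t ∈ Set.Ioo ((a + b) / 2) b, |f' t| ≤ M₂ * t ^ (-2 : ℤ)) :
    |f ((a + b) / 2) - (1 / (b - a)) * ∫ t in a..b, f t| ≤
      (1 / 2) *
        (M₁ * (((a + b) / 2 - ((a + b) / 2 - a) / (Real.log ((a + b) / 2) - Real.log a)) /
            ((((a + b) / 2 - a) / (Real.log ((a + b) / 2) - Real.log a)) * ((a + b) / 2))) +
         M₂ * (((b - (a + b) / 2) / (Real.log b - Real.log ((a + b) / 2)) - (a + b) / 2) /
            (((b - (a + b) / 2) / (Real.log b - Real.log ((a + b) / 2))) * ((a + b) / 2)))) := by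
  set A : ℝ := (a + b) / 2 with hA
  have haA : a < A := by rw [hA]; linarith
  have hAb : A < b := by rw [hA]; linarith
  have hA0 : 0 < A := lt_trans ha haA
  have hb0 : 0 < b := lt_trans hA0 hAb
  -- nonnegativity of M₁, M₂
  have hM₁0 : 0 ≤ M₁ := by
    have ht : (a + A) / 2 ∈ Set.Ioo a A := by constructor <;> linarith
    have h1 := (abs_nonneg (f' ((a+A)/2))).trans (hM₁ _ ht)
    have h2 : (0:ℝ) < ((a + A) / 2) ^ (-2 : ℤ) := zpow_pos (by linarith) _
    nlinarith
  have hM₂0 : 0 ≤ M₂ := by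
    have ht : (A + b) / 2 ∈ Set.Ioo A b := by constructor <;> linarith
    have h1 := (abs_nonneg (f' ((A+b)/2))).trans (hM₂ _ ht)
    have h2 : (0:ℝ) < ((A + b) / 2) ^ (-2 : ℤ) := zpow_pos (by linarith) _
    nlinarith
  -- pointwise bounds
  have h1 : ∀ t ∈ Set.Icc a A, |f A - f t| ≤ M₁ * (1/t - 1/A) := by
    intro t ht
    rcases eq_or_lt_of_le ht.2 with heq | hlt
    · rw [heq]; simp
    · have htpos : 0 < t := lt_of_lt_of_le ha ht.1
      exact key_aux f f' M₁ t A htpos hlt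
        (hfc.mono (Set.Icc_subset_Icc ht.1 hAb.le))
        (fun s hs => hf' s ⟨⟨lt_of_le_of_lt ht.1 hs.1, lt_trans hs.2 hAb⟩, ne_of_lt hs.2⟩)
        (fun s hs => hM₁ s ⟨lt_of_le_of_lt ht.1 hs.1, hs.2⟩)
  have h2 : ∀ t ∈ Set.Icc A b, |f t - f A| ≤ M₂ * (1/A - 1/t) := by
    intro t ht
    rcases eq_or_lt_of_le ht.1 with heq | hlt
    · rw [← heq]; simp
    · exact key_aux f f' M₂ A t hA0 hlt
        (hfc.mono (Set.Icc_subset_Icc haA.le ht.2))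
        (fun s hs => hf' s ⟨⟨lt_trans haA hs.1, lt_of_lt_of_le hs.2 ht.2⟩, ne_of_gt hs.1⟩)
        (fun s hs => hM₂ s ⟨hs.1, lt_of_lt_of_le hs.2 ht.2⟩)
  -- integrability
  have hfint : ∀ c d : ℝ, a ≤ c → d ≤ b → c ≤ d → IntervalIntegrable (fun t => f A - f t) volume c d := by
    intro c d hc hd hcd
    apply ContinuousOn.intervalIntegrable
    rw [Set.uIcc_of_le hcd]
    exact continuousOn_const.sub (hfc.mono (Set.Icc_subset_Icc hc hd))
  have habs_int : ∀ c d : ℝ, a ≤ c → d ≤ b → c ≤ d → IntervalIntegrable (fun t => |f A - f t|) volume c d := by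
    intro c d hc hd hcd
    apply ContinuousOn.intervalIntegrable
    rw [Set.uIcc_of_le hcd]
    exact (continuousOn_const.sub (hfc.mono (Set.Icc_subset_Icc hc hd))).abs
  have hinv_int : ∀ c d : ℝ, 0 < c → c ≤ d → IntervalIntegrable (fun t => 1/t) volume c d := by
    intro c d hc hcd
    apply ContinuousOn.intervalIntegrable
    rw [Set.uIcc_of_le hcd]
    exact ContinuousOn.div continuousOn_const continuousOn_id
      (fun x hx => ne_of_gt (lt_of_lt_of_le hc hx.1))
  have hlog : ∀ c d : ℝ, 0 < c → 0 < d → c ≤ d → ∫ t in c..d, 1/t = Real.log d - Real.log c := by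
    intro c d hc hd hcd
    rw [integral_one_div (by
      rw [Set.uIcc_of_le hcd]
      intro h
      exact absurd h.1 (by linarith)), Real.log_div (ne_of_gt hd) (ne_of_gt hc)]
  -- bound functions integrable
  have hB1_int : IntervalIntegrable (fun t => M₁ * (1/t - 1/A)) volume a A :=
    (((hinv_int a A ha haA.le).sub intervalIntegrable_const).const_mul M₁)
  have hB2_int : IntervalIntegrable (fun t => M₂ * (1/A - 1/t)) volume A b :=
    ((intervalIntegrable_const.sub (hinv_int A b hA0 hAb.le)).const_mul M₂)
  -- values of bound integrals
  have hI1val : ∫ t in a..A, M₁ * (1/t - 1/A) = M₁ * ((Real.log A - Real.log a) - (A - a)/A) := by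
    rw [intervalIntegral.integral_const_mul,
      intervalIntegral.integral_sub (hinv_int a A ha haA.le) intervalIntegrable_const,
      hlog a A ha hA0 haA.le, intervalIntegral.integral_const, smul_eq_mul]
    ring
  have hI2val : ∫ t in A..b, M₂ * (1/A - 1/t) = M₂ * ((b - A)/A - (Real.log b - Real.log A)) := by
    rw [intervalIntegral.integral_const_mul,
      intervalIntegral.integral_sub intervalIntegrable_const (hinv_int A b hA0 hAb.le),
      hlog A b hA0 hb0 hAb.le, intervalIntegral.integral_const, smul_eq_mul]
    ring
  -- bounds on the two pieces
  have hP1 : |∫ t in a..A, (f A - f t)| ≤ M₁ * ((Real.log A - Real.log a) - (A - a)/A) := by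
    rw [← hI1val]
    calc |∫ t in a..A, (f A - f t)| ≤ ∫ t in a..A, |f A - f t| :=
          intervalIntegral.abs_integral_le_integral_abs haA.le
      _ ≤ ∫ t in a..A, M₁ * (1/t - 1/A) :=
          intervalIntegral.integral_mono_on haA.le (habs_int a A le_rfl hAb.le haA.le) hB1_int h1
  have hP2 : |∫ t in A..b, (f A - f t)| ≤ M₂ * ((b - A)/A - (Real.log b - Real.log A)) := by
    rw [← hI2val]
    calc |∫ t in A..b, (f A - f t)| ≤ ∫ t in A..b, |f A - f t| :=
          intervalIntegral.abs_integral_le_integral_abs hAb.le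
      _ ≤ ∫ t in A..b, M₂ * (1/A - 1/t) := by
          apply intervalIntegral.integral_mono_on hAb.le (habs_int A b haA.le le_rfl hAb.le) hB2_int
          intro t ht
          rw [abs_sub_comm]
          exact h2 t ht
  -- rewrite LHS
  have hba : (0:ℝ) < b - a := by linarith
  have hsplit : ∫ t in a..b, (f A - f t) = (∫ t in a..A, (f A - f t)) + ∫ t in A..b, (f A - f t) :=
    (intervalIntegral.integral_add_adjacent_intervals
      (hfint a A le_rfl hAb.le haA.le) (hfint A b haA.le le_rfl hAb.le)).symm
  have hfull : f A - (1 / (b - a)) * ∫ t in a..b, f t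
      = (1 / (b - a)) * ∫ t in a..b, (f A - f t) := by
    rw [intervalIntegral.integral_sub
      (intervalIntegrable_const) (ContinuousOn.intervalIntegrable (by rw [Set.uIcc_of_le hab.le]; exact hfc)),
      intervalIntegral.integral_const, smul_eq_mul]
    field_simp
  rw [hfull, abs_mul, abs_of_nonneg (by positivity : (0:ℝ) ≤ 1/(b-a))]
  have hchain : |∫ t in a..b, (f A - f t)| ≤
      M₁ * ((Real.log A - Real.log a) - (A - a)/A)
      + M₂ * ((b - A)/A - (Real.log b - Real.log A)) := by
    rw [hsplit]
    exact (abs_add_le _ _).trans (add_le_add hP1 hP2)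
  have hstep : (1/(b-a)) * |∫ t in a..b, (f A - f t)| ≤
      (1/(b-a)) * (M₁ * ((Real.log A - Real.log a) - (A - a)/A)
        + M₂ * ((b - A)/A - (Real.log b - Real.log A))) :=
    mul_le_mul_of_nonneg_left hchain (by positivity)
  refine hstep.trans (le_of_eq ?_)
  -- final algebra
  have hl1 : 0 < Real.log A - Real.log a := by
    rw [sub_pos]
    exact Real.log_lt_log ha haA
  have hl2 : 0 < Real.log b - Real.log A := by
    rw [sub_pos]
    exact Real.log_lt_log hA0 hAb
  have hAa : A - a = (b - a)/2 := by rw [hA]; ring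
  have hbA : b - A = (b - a)/2 := by rw [hA]; ring
  rw [hAa, hbA]
  field_simp
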